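/- Let A be a commutative ring and B a commutative A-algebra such that for every A-module M, B ⊗_A M = 0 implies M = 0. Then: (1) if p : M → N is an A-linear map and B ⊗_A p is surjective, then p is surjective; (2) if B ⊗_A M is a finitely generated B-module, then M is a finitely generated A-module; (3) if M is a flat A-module and B ⊗_A M is a finitely presented B-module, then M is a finitely presented A-module. -/

import Mathlib

set_option maxHeartbeats 1000000


open Function TensorProduct

/-- Let `B` be a commutative `A`-algebra such that base change along `A → B` detects
nonzero modules.  Then: (1) if `B ⊗ p` is surjective then `p` is surjective;
(2) if `B ⊗ M` is a finitely generated `B`-module then `M` is finitely generated;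
(3) if `M` is flat and `B ⊗ M` is a finitely presented `B`-module then `M` is
finitely presented. -/
theorem stmt_15 {A B : Type} [CommRing A] [CommRing B] [Algebra A B]
    (hdet : ∀ (M : Type) (_ : AddCommGroup M) (_ : Module A M),
      Subsingleton (B ⊗[A] M) → Subsingleton M) :
    (∀ (M N : Type) (_ : AddCommGroup M) (_ : Module A M)
        (_ : AddCommGroup N) (_ : Module A N) (p : M →ₗ[A] N),
      Surjective (LinearMap.lTensor B p) → Surjective p) ∧
    (∀ (M : Type) (_ : AddCommGroup M) (_ : Module A M),
      Module.Finite B (B ⊗[A] M) → Module.Finite A M) ∧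
    (∀ (M : Type) (_ : AddCommGroup M) (_ : Module A M),
      Module.Flat A M → Module.FinitePresentation B (B ⊗[A] M) →
      Module.FinitePresentation A M) := by
  classical
  -- Part (1)
  have h1 : ∀ (M N : Type) (_ : AddCommGroup M) (_ : Module A M)
      (_ : AddCommGroup N) (_ : Module A N) (p : M →ₗ[A] N),
      Surjective (LinearMap.lTensor B p) → Surjective p := by
    intro M N _ _ _ _ p hp
    have hq : Surjective ((LinearMap.range p).mkQ) := Submodule.mkQ_surjective _
    have hzero : ((LinearMap.range p).mkQ).lTensor B ∘ₗ p.lTensor B = 0 := by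
      rw [← LinearMap.lTensor_comp, LinearMap.range_mkQ_comp, LinearMap.lTensor_zero]
    have hsub : Subsingleton (B ⊗[A] (N ⧸ LinearMap.range p)) := by
      refine subsingleton_of_forall_eq 0 fun y => ?_
      obtain ⟨x, rfl⟩ := LinearMap.lTensor_surjective B hq y
      obtain ⟨z, rfl⟩ := hp x
      simpa using LinearMap.congr_fun hzero z
    have := hdet _ _ _ hsub
    exact LinearMap.range_eq_top.mp
      (Submodule.Quotient.subsingleton_iff.mp this)
  -- Part (2)
  have h2 : ∀ (M : Type) (_ : AddCommGroup M) (_ : Module A M),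
      Module.Finite B (B ⊗[A] M) → Module.Finite A M := by
    intro M _ _ hfin
    obtain ⟨s, hs⟩ := hfin.fg_top
    choose c hc using fun x : B ⊗[A] M => TensorProduct.exists_finset x
    set T : Finset M := s.biUnion fun x => (c x).image Prod.snd with hT
    set M₀ : Submodule A M := Submodule.span A (T : Set M) with hM₀def
    have hsurjBC : Surjective (M₀.subtype.baseChange B) := by
      rw [← LinearMap.range_eq_top, eq_top_iff, ← hs, Submodule.span_le]
      intro x hx
      rw [SetLike.mem_coe]
      rw [hc x]
      refine Submodule.sum_mem _ fun i hi => ?_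
      have hiT : i.2 ∈ M₀ := Submodule.subset_span
        (Finset.mem_biUnion.mpr ⟨x, hx, Finset.mem_image_of_mem _ hi⟩)
      exact ⟨i.1 ⊗ₜ[A] (⟨i.2, hiT⟩ : M₀), rfl⟩
    have hsurj : Surjective (LinearMap.lTensor B M₀.subtype) := by
      rwa [show ⇑(LinearMap.lTensor B M₀.subtype) = ⇑(M₀.subtype.baseChange B) from
        (LinearMap.baseChange_eq_ltensor M₀.subtype).symm]
    have hST := h1 M₀ M _ _ _ _ M₀.subtype hsurj
    have hM₀ : M₀ = ⊤ := by
      rw [eq_top_iff]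
      intro x _
      obtain ⟨y, rfl⟩ := hST x
      exact y.2
    exact ⟨⟨T, hM₀⟩⟩
  refine ⟨h1, h2, ?_⟩
  -- Part (3)
  intro M _ _ hflat hfp
  haveI := hflat
  haveI := hfp
  haveI hfinM : Module.Finite A M := by
    obtain ⟨s, hs, -⟩ := hfp.out
    exact h2 M _ _ ⟨⟨s, hs⟩⟩
  obtain ⟨n, f, hf⟩ := Module.Finite.exists_fin' A M
  set K := LinearMap.ker f with hK
  -- a free presentation of `B` as an `A`-module
  set gB : (B →₀ A) →ₗ[A] B := Finsupp.linearCombination A id with hgBdef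
  have hgB : Surjective gB := fun b => ⟨Finsupp.single b 1, by simp [hgBdef]⟩
  have hinj : Injective (LinearMap.lTensor B K.subtype) := by
    refine lTensor_injective_of_exact_of_exact_of_rTensor_injective (R := A)
      (M₁ := ↥(LinearMap.ker gB)) (M₂ := (B →₀ A)) (M₃ := B)
      (N₁ := ↥K) (N₂ := Fin n → A) (N₃ := M)
      (f₁ := (LinearMap.ker gB).subtype) (f₂ := gB) (g₁ := K.subtype) (g₂ := f)
      (gB.exact_subtype_ker_map) hgB (f.exact_subtype_ker_map) hf ?_ ?_
    · exact Module.Flat.rTensor_preserves_injective_linearMap _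
        (Submodule.injective_subtype _)
    · exact Module.Flat.lTensor_preserves_injective_linearMap _
        (Submodule.injective_subtype _)
  have hexact : Function.Exact (LinearMap.lTensor B K.subtype) (LinearMap.lTensor B f) :=
    lTensor_exact B f.exact_subtype_ker_map hf
  have hcoe1 : ⇑(K.subtype.baseChange B) = ⇑(LinearMap.lTensor B K.subtype) :=
    LinearMap.baseChange_eq_ltensor K.subtype
  have hcoe2 : ⇑(f.baseChange B) = ⇑(LinearMap.lTensor B f) :=
    LinearMap.baseChange_eq_ltensor f
  have hrange : LinearMap.range (K.subtype.baseChange B) = LinearMap.ker (f.baseChange B) := by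
    ext x
    simp only [LinearMap.mem_range, LinearMap.mem_ker]
    constructor
    · rintro ⟨y, rfl⟩
      rw [congrFun hcoe2, congrFun hcoe1]
      exact hexact.apply_apply_eq_zero y
    · intro hx
      have hx' : (LinearMap.lTensor B f) x = 0 := by
        rw [← congrFun hcoe2 x]; exact hx
      obtain ⟨y, hy⟩ := (hexact x).mp hx'
      exact ⟨y, by rw [congrFun hcoe1]; exact hy⟩
  have hsurjf : Surjective (f.baseChange B) := by
    rw [hcoe2]; exact LinearMap.lTensor_surjective B hf
  have hkerfg : (LinearMap.ker (f.baseChange B)).FG :=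
    Module.FinitePresentation.fg_ker (f.baseChange B) hsurjf
  haveI : Module.Finite B ↥(LinearMap.ker (f.baseChange B)) :=
    Module.Finite.iff_fg.mpr hkerfg
  haveI : Module.Finite B (B ⊗[A] ↥K) := by
    have hjinj : Injective (K.subtype.baseChange B) := by rw [hcoe1]; exact hinj
    have e : (B ⊗[A] ↥K) ≃ₗ[B] ↥(LinearMap.ker (f.baseChange B)) :=
      hrange ▸ LinearEquiv.ofInjective (K.subtype.baseChange B) hjinj
    exact Module.Finite.equiv e.symm
  have hKfin : Module.Finite A ↥K := h2 ↥K _ _ inferInstance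
  exact Module.finitePresentation_of_free_of_surjective f hf
    (Module.Finite.iff_fg.mp hKfin)
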